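/- arXiv:math/0303137 — 5 statements merged into one kernel-verified Lean document; each statement's English description precedes it below -/
import Mathlib

section
/- Let n > 2 and α > 0. There exists A ≥ 2 (depending on n, α) such that the function v(x) = (log(A+|x|²))^(−α) on ℝⁿ satisfies −Δv(x) ≥ (α(n−2)/A) · (log(A+|x|²))^(−α−1) · (1+|x|²)^(−1) for all x ∈ ℝⁿ. -/
open Real

/-- The Euclidean Laplacian of a function on `ℝⁿ`. -/
noncomputable def laplacian {n : ℕ} (f : EuclideanSpace ℝ (Fin n) → ℝ)
    (x : EuclideanSpace ℝ (Fin n)) : ℝ :=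
  ∑ i, fderiv ℝ (fun y => fderiv ℝ f y (EuclideanSpace.single i 1)) x
    (EuclideanSpace.single i 1)

section Aux

variable {n : ℕ}
local notation "E" => EuclideanSpace ℝ (Fin n)

lemma hasFDerivAt_u' (A : ℝ) (x : E) :
    HasFDerivAt (fun y : E => A + ‖y‖ ^ 2) ((2:ℝ) • innerSL ℝ x) x := by
  rw [show ((2:ℝ) • innerSL ℝ x) = ((2:ℕ) • innerSL ℝ x) by module]
  exact ((hasStrictFDerivAt_norm_sq x).hasFDerivAt.const_add A)

lemma hasDerivAt_logpow' (p : ℝ) {t : ℝ} (ht : 2 ≤ t) :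
    HasDerivAt (fun s : ℝ => (Real.log s) ^ p)
      (p * (Real.log t) ^ (p - 1) * t⁻¹) t := by
  have ht0 : (0:ℝ) < t := by linarith
  have hlog : (0:ℝ) < Real.log t := Real.log_pos (by linarith)
  have h1 : HasDerivAt Real.log t⁻¹ t := Real.hasDerivAt_log ht0.ne'
  have h2 : HasDerivAt (fun u : ℝ => u ^ p) (p * (Real.log t) ^ (p - 1)) (Real.log t) :=
    Real.hasDerivAt_rpow_const (Or.inl hlog.ne')
  exact h2.comp t h1

lemma hasDerivAt_c' (α : ℝ) {t : ℝ} (ht : 2 ≤ t) :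
    HasDerivAt (fun s : ℝ => -α * (Real.log s) ^ (-α - 1) * s⁻¹)
      (α * (α + 1) * (Real.log t) ^ (-α - 2) * (t ^ 2)⁻¹
        + α * (Real.log t) ^ (-α - 1) * (t ^ 2)⁻¹) t := by
  have ht0 : (0:ℝ) < t := by linarith
  have h1 := hasDerivAt_logpow' (-α - 1) ht
  have h2 : HasDerivAt (fun s : ℝ => s⁻¹) (-(t ^ 2)⁻¹) t := hasDerivAt_inv ht0.ne'
  have h3 := (h1.mul h2).const_mul (-α)
  have he : (-α - 1 - 1) = -α - 2 := by ring
  rw [he] at h3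
  refine (h3.congr_deriv ?_).congr_of_eventuallyEq (Filter.Eventually.of_forall fun s => ?_)
  · ring
  · simp only [Pi.mul_apply]; ring

lemma fderiv_v_apply' (A α : ℝ) (hA : 2 ≤ A) (i : Fin n) (y : E) :
    fderiv ℝ (fun z : E => (Real.log (A + ‖z‖ ^ 2)) ^ (-α)) y (EuclideanSpace.single i 1)
      = (-α * (Real.log (A + ‖y‖ ^ 2)) ^ (-α - 1) * (A + ‖y‖ ^ 2)⁻¹) * (2 * y i) := by
  have ht : (2:ℝ) ≤ A + ‖y‖ ^ 2 := by nlinarith [sq_nonneg (‖y‖)]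
  have hv : HasFDerivAt (fun z : E => (Real.log (A + ‖z‖ ^ 2)) ^ (-α))
      ((-α * (Real.log (A + ‖y‖ ^ 2)) ^ (-α - 1) * (A + ‖y‖ ^ 2)⁻¹) •
        ((2:ℝ) • innerSL ℝ y)) y := by
    have h := hasDerivAt_logpow' (-α) ht
    rw [show (-α - 1) = (-α) - 1 by ring] at h ⊢
    exact h.comp_hasFDerivAt y (hasFDerivAt_u' A y)
  rw [hv.fderiv]
  simp [real_inner_comm, EuclideanSpace.inner_single_right]

lemma second_apply' (A α : ℝ) (hA : 2 ≤ A) (i : Fin n) (x : E) :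
    fderiv ℝ (fun y : E =>
        fderiv ℝ (fun z : E => (Real.log (A + ‖z‖ ^ 2)) ^ (-α)) y (EuclideanSpace.single i 1))
      x (EuclideanSpace.single i 1)
    = 2 * (-α * (Real.log (A + ‖x‖ ^ 2)) ^ (-α - 1) * (A + ‖x‖ ^ 2)⁻¹)
      + 4 * (α * (α + 1) * (Real.log (A + ‖x‖ ^ 2)) ^ (-α - 2) * ((A + ‖x‖ ^ 2) ^ 2)⁻¹
        + α * (Real.log (A + ‖x‖ ^ 2)) ^ (-α - 1) * ((A + ‖x‖ ^ 2) ^ 2)⁻¹) * (x i) ^ 2 := by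
  have hfun : (fun y : E =>
      fderiv ℝ (fun z : E => (Real.log (A + ‖z‖ ^ 2)) ^ (-α)) y (EuclideanSpace.single i 1))
      = fun y : E => (-α * (Real.log (A + ‖y‖ ^ 2)) ^ (-α - 1) * (A + ‖y‖ ^ 2)⁻¹) * (2 * y i) := by
    funext y; exact fderiv_v_apply' A α hA i y
  rw [hfun]
  have ht : (2:ℝ) ≤ A + ‖x‖ ^ 2 := by nlinarith [sq_nonneg (‖x‖)]
  have hcu : HasFDerivAt
      (fun y : E => -α * (Real.log (A + ‖y‖ ^ 2)) ^ (-α - 1) * (A + ‖y‖ ^ 2)⁻¹)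
      ((α * (α + 1) * (Real.log (A + ‖x‖ ^ 2)) ^ (-α - 2) * ((A + ‖x‖ ^ 2) ^ 2)⁻¹
        + α * (Real.log (A + ‖x‖ ^ 2)) ^ (-α - 1) * ((A + ‖x‖ ^ 2) ^ 2)⁻¹) •
        ((2:ℝ) • innerSL ℝ x)) x :=
    (hasDerivAt_c' α ht).comp_hasFDerivAt (f := fun y : E => A + ‖y‖ ^ 2) x (hasFDerivAt_u' A x)
  have hg : HasFDerivAt (fun y : E => 2 * y i)
      ((2:ℝ) • (EuclideanSpace.proj i : E →L[ℝ] ℝ)) x :=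
    ((EuclideanSpace.proj i : E →L[ℝ] ℝ).hasFDerivAt).const_mul 2
  have hmul : HasFDerivAt (fun y : E => -α * (Real.log (A + ‖y‖ ^ 2)) ^ (-α - 1) * (A + ‖y‖ ^ 2)⁻¹ * (2 * y i)) _ x := hcu.mul hg
  rw [hmul.fderiv]
  simp [real_inner_comm, EuclideanSpace.proj, EuclideanSpace.inner_single_right]
  ring

end Aux


lemma key_ineq (n A r L α : ℝ) (hn2 : 2 < n) (hα : 0 < α) (hA2 : 2 ≤ A) (hr : 0 ≤ r)
    (hL : 0 < L) (hLge : 4 * (α + 1) ≤ (n - 2) * L) :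
    α * (n - 2) / A * L ^ (-α - 1) * (1 + r)⁻¹ ≤
      -(n * (2 * (-α * L ^ (-α - 1) * (A + r)⁻¹))
        + 4 * (α * (α + 1) * L ^ (-α - 2) * ((A + r) ^ 2)⁻¹
          + α * L ^ (-α - 1) * ((A + r) ^ 2)⁻¹) * r) := by
  have hn2' : (0:ℝ) < n - 2 := by linarith
  have hA0 : (0:ℝ) < A := by linarith
  have hu0 : (0:ℝ) < A + r := by linarith
  have hup : (0:ℝ) < (A + r) ^ 2 := by positivity
  have h1r : (0:ℝ) < 1 + r := by linarith
  have hP : (0:ℝ) < L ^ (-α - 1) := Real.rpow_pos_of_pos hL _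
  have hQ : L ^ (-α - 2) = L ^ (-α - 1) * L⁻¹ := by
    rw [show (-α - 2) = (-α - 1) + (-1) by ring, Real.rpow_add hL, Real.rpow_neg_one]
  have hnum : (n - 2) * ((A + r) ^ 2) ≤ (2 * n * A + (n - 2) * r) * (A * (1 + r)) := by
    nlinarith [hn2', sq_nonneg A,
      mul_nonneg (mul_nonneg hr hr) (mul_nonneg hn2'.le (by linarith : (0:ℝ) ≤ A - 1)),
      mul_nonneg (mul_nonneg (mul_nonneg hr hA0.le) hn2'.le) (by linarith : (0:ℝ) ≤ A - 2),
      mul_nonneg (mul_nonneg hr hA0.le) hA0.le,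
      mul_nonneg (mul_nonneg hr hA0.le) hn2'.le,
      mul_nonneg hn2'.le (sq_nonneg A)]
  have hLinv : 4 * (α + 1) * L⁻¹ ≤ n - 2 := by
    rw [show 4 * (α + 1) * L⁻¹ = 4 * (α + 1) / L by ring, div_le_iff₀ hL]
    linarith
  have key : (n - 2) / A * (1 + r)⁻¹
      ≤ 2 * n * (A + r)⁻¹ - 4 * (α + 1) * L⁻¹ * r * ((A + r) ^ 2)⁻¹
        - 4 * r * ((A + r) ^ 2)⁻¹ := by
    have step1 : (n - 2) / A * (1 + r)⁻¹
        ≤ (2 * n * A + (n - 2) * r) / ((A + r) ^ 2) := by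
      rw [show (n - 2) / A * (1 + r)⁻¹ = (n - 2) / (A * (1 + r)) by field_simp]
      rw [div_le_div_iff₀ (by positivity) hup]
      exact hnum
    refine step1.trans ?_
    have hnum2 : 2 * n * A + (n - 2) * r
        ≤ 2 * n * (A + r) - 4 * (α + 1) * L⁻¹ * r - 4 * r := by
      have h := mul_le_mul_of_nonneg_right hLinv hr
      nlinarith
    calc (2 * n * A + (n - 2) * r) / ((A + r) ^ 2)
        ≤ (2 * n * (A + r) - 4 * (α + 1) * L⁻¹ * r - 4 * r) / ((A + r) ^ 2) := by gcongr
      _ = 2 * n * (A + r)⁻¹ - 4 * (α + 1) * L⁻¹ * r * ((A + r) ^ 2)⁻¹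
          - 4 * r * ((A + r) ^ 2)⁻¹ := by
          field_simp
  have hfac : -(n * (2 * (-α * L ^ (-α - 1) * (A + r)⁻¹))
        + 4 * (α * (α + 1) * L ^ (-α - 2) * ((A + r) ^ 2)⁻¹
          + α * L ^ (-α - 1) * ((A + r) ^ 2)⁻¹) * r)
      = α * L ^ (-α - 1) *
        (2 * n * (A + r)⁻¹ - 4 * (α + 1) * L⁻¹ * r * ((A + r) ^ 2)⁻¹
          - 4 * r * ((A + r) ^ 2)⁻¹) := by
    rw [hQ]; ring
  have hrhs : α * (n - 2) / A * L ^ (-α - 1) * (1 + r)⁻¹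
      = α * L ^ (-α - 1) * ((n - 2) / A * (1 + r)⁻¹) := by ring
  rw [hfac, hrhs]
  exact mul_le_mul_of_nonneg_left key (by positivity)

/-- For `n > 2`, `α > 0`, there is `A ≥ 2` such that
`v(x) = (log(A+|x|²))^(−α)` satisfies
`−Δv ≥ (α(n−2)/A)(log(A+|x|²))^(−α−1)(1+|x|²)^(−1)` on all of `ℝⁿ`. -/
theorem neg_laplacian_log_barrier (n : ℕ) (hn : 2 < n) (α : ℝ) (hα : 0 < α) :
    ∃ A : ℝ, 2 ≤ A ∧
      ∀ x : EuclideanSpace ℝ (Fin n),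
        -laplacian (fun y => (Real.log (A + ‖y‖ ^ 2)) ^ (-α)) x ≥
          α * ((n : ℝ) - 2) / A * (Real.log (A + ‖x‖ ^ 2)) ^ (-α - 1) *
            (1 + ‖x‖ ^ 2)⁻¹ := by
  have hn2 : (2:ℝ) < (n:ℝ) := by exact_mod_cast hn
  have hn2' : (0:ℝ) < (n:ℝ) - 2 := by linarith
  refine ⟨max 2 (Real.exp (4 * (α + 1) / ((n:ℝ) - 2))), le_max_left _ _, fun x => ?_⟩
  set A : ℝ := max 2 (Real.exp (4 * (α + 1) / ((n:ℝ) - 2))) with hAdef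
  have hA2 : (2:ℝ) ≤ A := le_max_left _ _
  have hA0 : (0:ℝ) < A := by linarith
  have hr : (0:ℝ) ≤ ‖x‖ ^ 2 := sq_nonneg _
  have hu2 : (2:ℝ) ≤ A + ‖x‖ ^ 2 := by linarith
  have hL : (0:ℝ) < Real.log (A + ‖x‖ ^ 2) := Real.log_pos (by linarith)
  have hLge : 4 * (α + 1) ≤ ((n:ℝ) - 2) * Real.log (A + ‖x‖ ^ 2) := by
    have hlogA : 4 * (α + 1) / ((n:ℝ) - 2) ≤ Real.log (A + ‖x‖ ^ 2) := by
      calc 4 * (α + 1) / ((n:ℝ) - 2)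
          = Real.log (Real.exp (4 * (α + 1) / ((n:ℝ) - 2))) := (Real.log_exp _).symm
        _ ≤ Real.log (A + ‖x‖ ^ 2) :=
            Real.log_le_log (Real.exp_pos _) (le_trans (le_max_right _ _) (by linarith))
    rw [div_le_iff₀ hn2'] at hlogA
    linarith
  have hsum : ∑ i, (x i) ^ 2 = ‖x‖ ^ 2 := by
    rw [PiLp.norm_sq_eq_of_L2]
    simp [sq_abs]
  have hlap : laplacian (fun y => (Real.log (A + ‖y‖ ^ 2)) ^ (-α)) x
      = (n:ℝ) * (2 * (-α * (Real.log (A + ‖x‖ ^ 2)) ^ (-α - 1) * (A + ‖x‖ ^ 2)⁻¹))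
        + 4 * (α * (α + 1) * (Real.log (A + ‖x‖ ^ 2)) ^ (-α - 2) * ((A + ‖x‖ ^ 2) ^ 2)⁻¹
          + α * (Real.log (A + ‖x‖ ^ 2)) ^ (-α - 1) * ((A + ‖x‖ ^ 2) ^ 2)⁻¹) * (‖x‖ ^ 2) := by
    unfold laplacian
    rw [Finset.sum_congr rfl (fun i _ => second_apply' A α hA2 i x)]
    rw [Finset.sum_add_distrib, Finset.sum_const, Finset.card_univ, Fintype.card_fin,
      ← Finset.mul_sum, hsum]
    ring
  rw [ge_iff_le, hlap]
  exact key_ineq (n:ℝ) A (‖x‖ ^ 2) (Real.log (A + ‖x‖ ^ 2)) α hn2 hα hA2 hr hL hLge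
end

section
/- Let M be a complex manifold with two conformal Hermitian metrics γ = f δ_{αβ̄} and γ̃ = f̃ δ_{αβ̄} (f, f̃ smooth positive real-valued functions) on an open set of ℂᵐ. Then the norm of the tension field of the identity map id : (M,γ) → (M,γ̃) is ‖σ(id)‖ = ((m−1)/(2f)) |∇√f̃|. In particular if f = f̃, then ‖σ(id)‖ = ((m−1)/2) |∇(1/√f)|. -/
open Real

noncomputable section

/-- `ℂᵐ` viewed as `ℝ^{2m}`, with real coordinates indexed by `Fin m × Fin 2`
(the pair `(α, 0)`/`(α, 1)` being the real/imaginary part of `z_α`). -/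
abbrev Cm (m : ℕ) := EuclideanSpace ℝ (Fin m × Fin 2)

/-- The coefficients `T^{jk} = Σ_α (∂ id^j/∂z^α)(∂ id^k/∂z̄^α)` for the
identity map in Wirtinger coordinates: the `2×2` block `(1/4)[[1, i],[−i, 1]]`
on each complex coordinate. -/
def idWirtinger (m : ℕ) (j k : Fin m × Fin 2) : ℂ :=
  if j.1 = k.1 then
    (1 / 4) * (if j.2 = k.2 then 1 else if j.2 = 0 then Complex.I else -Complex.I)
  else 0

/-- Partial derivative of a scalar function in the `i`-th coordinate
direction. -/
def pderiv' {m : ℕ} (h : Cm m → ℝ) (i : Fin m × Fin 2) (x : Cm m) : ℝ :=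
  fderiv ℝ h x (EuclideanSpace.single i 1)

/-- Christoffel symbols of the conformal metric `f̃ δ` on `ℝ^{2m}`:
`Γ^ℓ_{jk} = (1/(2f̃))(δ_{ℓj}∂_k f̃ + δ_{ℓk}∂_j f̃ − δ_{jk}∂_ℓ f̃)`. -/
def confChristoffel {m : ℕ} (ft : Cm m → ℝ) (l j k : Fin m × Fin 2) (x : Cm m) : ℝ :=
  (1 / (2 * ft x)) *
    ((if l = j then pderiv' ft k x else 0) + (if l = k then pderiv' ft j x else 0)
      - (if j = k then pderiv' ft l x else 0))

/-- The tension field of the identity map `id : (ℂᵐ, fδ) → (ℂᵐ, f̃δ)`: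
`σ(id)^ℓ = γ^{αβ̄}Γ^ℓ_{jk} ∂id^j/∂z^α ∂id^k/∂z̄^β = (1/f) Σ_{j,k} Γ^ℓ_{jk} T^{jk}`. -/
def tensionId {m : ℕ} (f ft : Cm m → ℝ) (l : Fin m × Fin 2) (x : Cm m) : ℂ :=
  ((1 / f x : ℝ) : ℂ) *
    ∑ j, ∑ k, ((confChristoffel ft l j k x : ℝ) : ℂ) * idWirtinger m j k

/-- The value of the Christoffel-symbol contraction appearing in the tension
field of the identity map. -/
lemma key_sum {m : ℕ} (ft : Cm m → ℝ) (l : Fin m × Fin 2) (x : Cm m) :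
    (∑ j, ∑ k, ((confChristoffel ft l j k x : ℝ) : ℂ) * idWirtinger m j k)
      = (((1 - (m : ℝ)) / (4 * ft x) * pderiv' ft l x : ℝ) : ℂ) := by
  obtain ⟨α, a⟩ := l
  have expand : ∀ j k : Fin m × Fin 2,
      ((confChristoffel ft (α, a) j k x : ℝ) : ℂ) * idWirtinger m j k
        = ((1 / (2 * ft x) : ℝ) : ℂ) *
          (((if (α, a) = j then ((pderiv' ft k x : ℝ) : ℂ) else 0)
            + (if (α, a) = k then ((pderiv' ft j x : ℝ) : ℂ) else 0)
            - (if j = k then ((pderiv' ft (α, a) x : ℝ) : ℂ) else 0)) * idWirtinger m j k) := by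
    intro j k
    simp only [confChristoffel]
    push_cast [apply_ite (Complex.ofReal)]
    ring
  simp only [expand, ← Finset.mul_sum]
  have S : (∑ j : Fin m × Fin 2, ∑ k : Fin m × Fin 2,
      ((if (α, a) = j then ((pderiv' ft k x : ℝ) : ℂ) else 0)
        + (if (α, a) = k then ((pderiv' ft j x : ℝ) : ℂ) else 0)
        - (if j = k then ((pderiv' ft (α, a) x : ℝ) : ℂ) else 0)) * idWirtinger m j k)
      = (((1 - (m : ℝ)) / 2 * pderiv' ft (α, a) x : ℝ) : ℂ) := by
    fin_cases a <;>
    · simp only [sub_mul, add_mul, Finset.sum_sub_distrib, Finset.sum_add_distrib, ite_mul,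
        zero_mul, Finset.sum_ite_irrel, Finset.sum_const_zero, Finset.sum_ite_eq,
        Finset.sum_ite_eq', Finset.mem_univ, if_true, idWirtinger, Fintype.sum_prod_type,
        mul_ite, mul_zero, Fin.sum_univ_two, Prod.mk.injEq, Fin.zero_eta, Fin.mk_one, and_true,
        and_false, if_false, one_ne_zero, zero_ne_one, Finset.sum_const, Finset.card_univ,
        Fintype.card_fin, nsmul_eq_mul, Fin.isValue, reduceIte]
      push_cast
      ring
  rw [S]
  push_cast
  ring

/-- The partial derivatives are the coordinates of the gradient. -/
lemma pd_eq_grad {m : ℕ} (h : Cm m → ℝ) (i : Fin m × Fin 2) (x : Cm m) :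
    pderiv' h i x = gradient h x i := by
  have h1 : fderiv ℝ h x (EuclideanSpace.single i 1)
      = (inner ℝ (gradient h x) (EuclideanSpace.single i (1:ℝ)) : ℝ) := by
    rw [gradient, InnerProductSpace.toDual_symm_apply]
  rw [pderiv', h1, EuclideanSpace.inner_single_right]
  simp

/-- Chain rule for the gradient of a scalar post-composition. -/
lemma grad_comp {m : ℕ} (φ : ℝ → ℝ) (h : Cm m → ℝ) (x : Cm m) (c : ℝ)
    (hφ : HasDerivAt φ c (h x)) (hh : DifferentiableAt ℝ h x) :
    gradient (fun y => φ (h y)) x = c • gradient h x := by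
  have h2 : HasFDerivAt (fun y => φ (h y)) (c • fderiv ℝ h x) x :=
    hφ.comp_hasFDerivAt x hh.hasFDerivAt
  rw [gradient, gradient, h2.fderiv, map_smul]

lemma sum_sq_grad {m : ℕ} (h : Cm m → ℝ) (x : Cm m) :
    ∑ l, (gradient h x l) ^ 2 = ‖gradient h x‖ ^ 2 := by
  rw [EuclideanSpace.norm_eq, Real.sq_sqrt (by positivity)]
  simp [Real.norm_eq_abs, sq_abs]

/-- For conformal metrics `γ = fδ`, `γ̃ = f̃δ` on an open set of `ℂᵐ`, the
norm of the tension field of the identity map is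
`‖σ(id)‖ = ((m−1)/(2f))|∇√f̃|`; in particular for `f = f̃` it equals
`((m−1)/2)|∇(1/√f)|`. -/
theorem tension_of_identity_conformal (m : ℕ) (hm : 1 ≤ m) (Ω : Set (Cm m))
    (hΩ : IsOpen Ω) (f ft : Cm m → ℝ)
    (hf : ∀ x ∈ Ω, 0 < f x) (hft : ∀ x ∈ Ω, 0 < ft x)
    (hfd : ∀ x ∈ Ω, DifferentiableAt ℝ f x)
    (hftd : ∀ x ∈ Ω, DifferentiableAt ℝ ft x)
    (x : Cm m) (hx : x ∈ Ω) :
    Real.sqrt (ft x * ∑ l, Complex.normSq (tensionId f ft l x)) =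
      ((m : ℝ) - 1) / (2 * f x) * ‖gradient (fun y => Real.sqrt (ft y)) x‖ ∧
    (f = ft →
      Real.sqrt (ft x * ∑ l, Complex.normSq (tensionId f ft l x)) =
        ((m : ℝ) - 1) / 2 * ‖gradient (fun y => (Real.sqrt (f y))⁻¹) x‖) := by
  have hfx : 0 < f x := hf x hx
  have hftx : 0 < ft x := hft x hx
  have hm1 : (1 : ℝ) ≤ (m : ℝ) := by exact_mod_cast hm
  set s : ℝ := Real.sqrt (ft x) with hs_def
  have hs : 0 < s := Real.sqrt_pos.mpr hftx
  have hs2 : s ^ 2 = ft x := Real.sq_sqrt hftx.le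
  set g : Cm m := gradient ft x with hg_def
  -- value of the tension field
  have hten : ∀ l, tensionId f ft l x
      = (((1 - (m : ℝ)) / (4 * f x * ft x) * g l : ℝ) : ℂ) := by
    intro l
    have hd : (1 : ℝ) / f x * ((1 - (m : ℝ)) / (4 * ft x))
        = (1 - (m : ℝ)) / (4 * f x * ft x) := by
      rw [div_mul_div_comm, one_mul]
      ring_nf
    have hr : (1 / f x) * ((1 - (m : ℝ)) / (4 * ft x) * pderiv' ft l x)
        = (1 - (m : ℝ)) / (4 * f x * ft x) * g l := by
      rw [pd_eq_grad, ← hg_def, ← mul_assoc, hd]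
    rw [tensionId, key_sum, ← Complex.ofReal_mul, hr]
  -- value of the squared norm
  have hLsum : ft x * ∑ l, Complex.normSq (tensionId f ft l x)
      = ft x * (((1 - (m : ℝ)) / (4 * f x * ft x)) ^ 2 * ‖g‖ ^ 2) := by
    congr 1
    simp only [hten, Complex.normSq_ofReal]
    rw [← sum_sq_grad ft x, ← hg_def, Finset.mul_sum]
    exact Finset.sum_congr rfl fun l _ => by ring
  have hA : (0:ℝ) ≤ ((m : ℝ) - 1) / (4 * f x * ft x) * s * ‖g‖ := by
    have : (0:ℝ) ≤ (m : ℝ) - 1 := by linarith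
    positivity
  have hLHS : Real.sqrt (ft x * ∑ l, Complex.normSq (tensionId f ft l x))
      = ((m : ℝ) - 1) / (4 * f x * ft x) * s * ‖g‖ := by
    rw [hLsum, show ft x * (((1 - (m : ℝ)) / (4 * f x * ft x)) ^ 2 * ‖g‖ ^ 2)
        = (((m : ℝ) - 1) / (4 * f x * ft x) * s * ‖g‖) ^ 2 by
      rw [← hs2]; field_simp; ring, Real.sqrt_sq hA]
  constructor
  · rw [hLHS, grad_comp _ ft x _ (Real.hasDerivAt_sqrt hftx.ne') (hftd x hx), norm_smul,
      Real.norm_eq_abs, abs_of_pos (by positivity : (0:ℝ) < 1 / (2 * s)), ← hg_def]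
    rw [← hs2]
    field_simp
    ring
  · intro hfe
    subst hfe
    rw [hLHS]
    have hdinv : HasDerivAt (fun t : ℝ => (Real.sqrt t)⁻¹)
        (-(1 / (2 * s)) / s ^ 2) (f x) :=
      (Real.hasDerivAt_sqrt hftx.ne').inv (by rw [← hs_def]; exact hs.ne')
    rw [grad_comp _ f x _ hdinv (hfd x hx), norm_smul, Real.norm_eq_abs, ← hg_def,
      show -(1 / (2 * s)) / s ^ 2 = -(1 / (2 * s ^ 3)) by field_simp, abs_neg,
      abs_of_pos (by positivity : (0:ℝ) < 1 / (2 * s ^ 3))]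
    rw [← hs2]
    field_simp
    ring

end
end

section
/- Let D : [r₀, ∞) → ℝ be a C² function with D' > 0, strictly increasing to infinity, satisfying |D''(r)|/(D'(r))² ≤ C D(r)^(−λ) for all large r, where λ > 1 and C > 0. Then D has linear growth: there exist constants 0 < C₄ < C₅ and C₆, C₇ such that C₄ r + C₆ ≤ D(r) ≤ C₅ r + C₇ for all large r. -/
open Set Filter Topology

/-- Let `D` be `C²` on `[r₀,∞)` with `D' > 0`, `D → ∞`, and
`|D''|/(D')² ≤ C·D^(−λ)` for all large `r`, where `λ > 1`, `C > 0`.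
Then `D` has linear growth: `C₄r + C₆ ≤ D(r) ≤ C₅r + C₇` for large `r`,
with `0 < C₄ < C₅`. -/
theorem linear_growth_of_distance (r₀ C lam : ℝ) (hlam : 1 < lam) (hC : 0 < C)
    (D : ℝ → ℝ) (hD : ContDiffOn ℝ 2 D (Ici r₀))
    (hD' : ∀ r ∈ Ici r₀, 0 < deriv D r)
    (hmono : StrictMonoOn D (Ici r₀))
    (htop : Tendsto D atTop atTop)
    (hineq : ∃ R₀ ∈ Ici r₀, ∀ r ∈ Ici R₀,
      |deriv (deriv D) r| / (deriv D r) ^ 2 ≤ C * (D r) ^ (-lam)) :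
    ∃ C₄ C₅ C₆ C₇ R : ℝ, 0 < C₄ ∧ C₄ < C₅ ∧
      ∀ r ∈ Ici R, C₄ * r + C₆ ≤ D r ∧ D r ≤ C₅ * r + C₇ := by
  obtain ⟨R₀, hR₀, hineq⟩ := hineq
  obtain ⟨R₂, hR₂⟩ := (htop.eventually_ge_atTop 1).exists_forall_of_atTop
  set R₁ : ℝ := max (max R₀ R₂) (r₀ + 1) with hR₁def
  have hR₁r₀ : r₀ < R₁ := lt_of_lt_of_le (by linarith) (le_max_right _ _)
  have hR₁R₀ : R₀ ≤ R₁ := le_trans (le_max_left _ _) (le_max_left _ _)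
  have hR₁R₂ : R₂ ≤ R₁ := le_trans (le_max_right _ _) (le_max_left _ _)
  have hsubI : Ici R₁ ⊆ Ioi r₀ := fun x hx => lt_of_lt_of_le hR₁r₀ hx
  have hsubI' : Ici R₁ ⊆ Ici r₀ := fun x hx => mem_Ici.2 (le_of_lt (hsubI hx))
  have hD1 : ∀ x ∈ Ici R₁, 1 ≤ D x := fun x hx => hR₂ x (le_trans hR₁R₂ hx)
  have hD0 : ∀ x ∈ Ici R₁, 0 < D x := fun x hx => lt_of_lt_of_le one_pos (hD1 x hx)
  -- differentiability facts
  have hD2 : ContDiffOn ℝ 2 D (Ioi r₀) := hD.mono Ioi_subset_Ici_self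
  have h21 : (2 : WithTop ℕ∞) = 1 + 1 := by norm_num
  rw [h21] at hD2
  obtain ⟨hDdiff, -, hD'c1⟩ := (contDiffOn_succ_iff_deriv_of_isOpen isOpen_Ioi).1 hD2
  have hD'diff : DifferentiableOn ℝ (deriv D) (Ioi r₀) := hD'c1.differentiableOn one_ne_zero
  have hDat : ∀ x ∈ Ioi r₀, DifferentiableAt ℝ D x := fun x hx =>
    (hDdiff x hx).differentiableAt (isOpen_Ioi.mem_nhds hx)
  have hD'at : ∀ x ∈ Ioi r₀, DifferentiableAt ℝ (deriv D) x := fun x hx =>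
    (hD'diff x hx).differentiableAt (isOpen_Ioi.mem_nhds hx)
  have hcontD : ContinuousOn D (Ici R₁) := (hD.continuousOn).mono hsubI'
  have hcontD' : ContinuousOn (deriv D) (Ici R₁) :=
    fun x hx => ((hD'at x (hsubI hx)).continuousAt).continuousWithinAt
  -- pointwise bound on second derivative
  have hbd : ∀ x ∈ Ici R₁, |deriv (deriv D) x| ≤ C * D x ^ (-lam) * (deriv D x) ^ 2 := by
    intro x hx
    have h1 := hineq x (le_trans hR₁R₀ hx)
    have h2 : (0:ℝ) < (deriv D x) ^ 2 := pow_pos (hD' x (hsubI' hx)) 2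
    exact (div_le_iff₀ h2).1 h1
  -- the auxiliary exponent function
  set φ : ℝ → ℝ := fun r => C / (lam - 1) * D r ^ (1 - lam) with hφdef
  have hlam1 : (0:ℝ) < lam - 1 := by linarith
  have hφat : ∀ x ∈ Ici R₁, HasDerivAt φ (-(C * D x ^ (-lam) * deriv D x)) x := by
    intro x hx
    have hx0 : D x ≠ 0 := ne_of_gt (hD0 x hx)
    have h1 := (HasDerivAt.rpow_const (p := 1 - lam)
      ((hDat x (hsubI hx)).hasDerivAt) (Or.inl hx0)).const_mul (C / (lam - 1))
    refine h1.congr_deriv ?_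
    rw [show 1 - lam - 1 = -lam by ring]
    field_simp
    ring
  have hφbounds : ∀ x ∈ Ici R₁, 0 < φ x ∧ φ x ≤ C / (lam - 1) := by
    intro x hx
    have h1 : (0:ℝ) < D x ^ (1 - lam) := Real.rpow_pos_of_pos (hD0 x hx) _
    have h2 : D x ^ (1 - lam) ≤ 1 :=
      Real.rpow_le_one_of_one_le_of_nonpos (hD1 x hx) (by linarith)
    constructor
    · exact mul_pos (div_pos hC hlam1) h1
    · calc φ x ≤ C / (lam - 1) * 1 :=
            mul_le_mul_of_nonneg_left h2 (le_of_lt (div_pos hC hlam1))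
        _ = C / (lam - 1) := mul_one _
  set c : ℝ := C / (lam - 1) with hcdef
  have hc : 0 < c := div_pos hC hlam1
  -- upper bound function h := D' * exp φ is antitone
  set h : ℝ → ℝ := fun r => deriv D r * Real.exp (φ r) with hhdef
  have hhat : ∀ x ∈ Ici R₁, HasDerivAt h
      (deriv (deriv D) x * Real.exp (φ x)
        + deriv D x * (Real.exp (φ x) * -(C * D x ^ (-lam) * deriv D x))) x := by
    intro x hx
    exact ((hD'at x (hsubI hx)).hasDerivAt).mul ((hφat x hx).exp)
  have hanti : AntitoneOn h (Ici R₁) := by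
    apply antitoneOn_of_deriv_nonpos (convex_Ici R₁)
    · intro x hx
      exact ((hhat x hx).differentiableAt).continuousAt.continuousWithinAt
    · rw [interior_Ici]
      intro x hx
      exact ((hhat x (mem_Ici.2 (le_of_lt hx))).differentiableAt).differentiableWithinAt
    · rw [interior_Ici]
      intro x hx
      rw [(hhat x (mem_Ici.2 (le_of_lt hx))).deriv]
      have h1 : deriv (deriv D) x ≤ C * D x ^ (-lam) * (deriv D x) ^ 2 :=
        le_of_abs_le (hbd x (mem_Ici.2 (le_of_lt hx)))
      have h2 := Real.exp_pos (φ x)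
      nlinarith [sq_nonneg (deriv D x)]
  -- lower bound function g := D' * exp (-φ) is monotone
  set g : ℝ → ℝ := fun r => deriv D r * Real.exp (-φ r) with hgdef
  have hgat : ∀ x ∈ Ici R₁, HasDerivAt g
      (deriv (deriv D) x * Real.exp (-φ x)
        + deriv D x * (Real.exp (-φ x) * (C * D x ^ (-lam) * deriv D x))) x := by
    intro x hx
    have := ((hD'at x (hsubI hx)).hasDerivAt).mul (((hφat x hx).neg).exp)
    refine this.congr_deriv ?_
    simp
  have hmonog : MonotoneOn g (Ici R₁) := by
    apply monotoneOn_of_deriv_nonneg (convex_Ici R₁)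
    · intro x hx
      exact ((hgat x hx).differentiableAt).continuousAt.continuousWithinAt
    · rw [interior_Ici]
      intro x hx
      exact ((hgat x (mem_Ici.2 (le_of_lt hx))).differentiableAt).differentiableWithinAt
    · rw [interior_Ici]
      intro x hx
      rw [(hgat x (mem_Ici.2 (le_of_lt hx))).deriv]
      have h1 : -(C * D x ^ (-lam) * (deriv D x) ^ 2) ≤ deriv (deriv D) x :=
        neg_le_of_abs_le (hbd x (mem_Ici.2 (le_of_lt hx)))
      have h2 := Real.exp_pos (-φ x)
      nlinarith [sq_nonneg (deriv D x)]
  -- derivative bounds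
  have hD'R₁ : 0 < deriv D R₁ := hD' R₁ (hsubI' self_mem_Ici)
  set C₄ : ℝ := deriv D R₁ * Real.exp (-c) with hC₄def
  set C₅ : ℝ := deriv D R₁ * Real.exp c with hC₅def
  have hlow : ∀ x ∈ Ici R₁, C₄ ≤ deriv D x := by
    intro x hx
    have hgx : g x ≤ deriv D x := by
      have : Real.exp (-φ x) ≤ 1 := Real.exp_le_one_iff.2 (by linarith [(hφbounds x hx).1])
      calc g x ≤ deriv D x * 1 :=
          mul_le_mul_of_nonneg_left this (le_of_lt (hD' x (hsubI' hx)))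
        _ = deriv D x := mul_one _
    have hgR₁ : C₄ ≤ g R₁ := by
      have : Real.exp (-c) ≤ Real.exp (-φ R₁) :=
        Real.exp_le_exp.2 (by linarith [(hφbounds R₁ self_mem_Ici).2])
      exact mul_le_mul_of_nonneg_left this (le_of_lt hD'R₁)
    exact le_trans (le_trans hgR₁ (hmonog self_mem_Ici hx hx)) hgx
  have hupp : ∀ x ∈ Ici R₁, deriv D x ≤ C₅ := by
    intro x hx
    have hhx : deriv D x ≤ h x := by
      have : (1:ℝ) ≤ Real.exp (φ x) := Real.one_le_exp (le_of_lt (hφbounds x hx).1)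
      calc deriv D x = deriv D x * 1 := (mul_one _).symm
        _ ≤ h x := mul_le_mul_of_nonneg_left this (le_of_lt (hD' x (hsubI' hx)))
    have hhR₁ : h R₁ ≤ C₅ := by
      have : Real.exp (φ R₁) ≤ Real.exp c :=
        Real.exp_le_exp.2 (hφbounds R₁ self_mem_Ici).2
      exact mul_le_mul_of_nonneg_left this (le_of_lt hD'R₁)
    exact le_trans (le_trans hhx (hanti self_mem_Ici hx hx)) hhR₁
  -- conclude linear growth
  refine ⟨C₄, C₅, D R₁ - C₄ * R₁, D R₁ - C₅ * R₁, R₁, ?_, ?_, ?_⟩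
  · exact mul_pos hD'R₁ (Real.exp_pos _)
  · exact mul_lt_mul_of_pos_left (Real.exp_lt_exp.2 (by linarith)) hD'R₁
  · intro r hr
    have hDdiffI : DifferentiableOn ℝ D (interior (Ici R₁)) := by
      rw [interior_Ici]
      intro x hx
      exact (hDat x (hsubI (mem_Ici.2 (le_of_lt hx)))).differentiableWithinAt
    have hlow' : ∀ x ∈ interior (Ici R₁), C₄ ≤ deriv D x := by
      rw [interior_Ici]; exact fun x hx => hlow x (mem_Ici.2 (le_of_lt hx))
    have hupp' : ∀ x ∈ interior (Ici R₁), deriv D x ≤ C₅ := by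
      rw [interior_Ici]; exact fun x hx => hupp x (mem_Ici.2 (le_of_lt hx))
    constructor
    · have := (convex_Ici R₁).mul_sub_le_image_sub_of_le_deriv hcontD hDdiffI hlow'
        R₁ self_mem_Ici r hr hr
      linarith
    · have := (convex_Ici R₁).image_sub_le_mul_sub_of_deriv_le hcontD hDdiffI hupp'
        R₁ self_mem_Ici r hr hr
      linarith
end

section
/- Let m ≥ 2 and μ > 0. Choose A ≥ 1 with (4m−5)A ≥ 4μ + 4. Then the function w(t,x) = (A + ln(1+|x|²) + t)^{−μ} on ℝ^{2m} × (0,∞) satisfies (−(1+|x|²)Δ + ∂/∂t) w ≥ 0, where Δ is the Euclidean Laplacian on ℝ^{2m}. -/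
open Real

lemma logRpow_hasDerivAt (A t : ℝ) (s : ℝ) (hs : 0 ≤ s) (hA : 1 ≤ A) (ht : 0 < t) (p : ℝ) :
    HasDerivAt (fun u => (A + Real.log (1+u) + t) ^ p)
      (p * (A + Real.log (1+s) + t) ^ (p-1) * (1+s)⁻¹) s := by
  have h1 : (0:ℝ) < 1 + s := by linarith
  have hL : 0 < A + Real.log (1+s) + t := by
    have := Real.log_nonneg (by linarith : (1:ℝ) ≤ 1+s); linarith
  have hlog : HasDerivAt (fun u => Real.log (1+u)) ((1+s)⁻¹) s := by
    simpa [Function.comp_def] using (Real.hasDerivAt_log h1.ne').comp s ((hasDerivAt_id s).const_add 1)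
  have hLd : HasDerivAt (fun u => A + Real.log (1+u) + t) ((1+s)⁻¹) s :=
    (hlog.const_add A).add_const t
  simpa [Function.comp_def, mul_assoc] using
    (Real.hasDerivAt_rpow_const (p := p) (Or.inl hL.ne')).comp s hLd

lemma G_hasDerivAt (μ A t : ℝ) (s : ℝ) (hs : 0 ≤ s) (hA : 1 ≤ A) (ht : 0 < t) :
    HasDerivAt (fun u => -μ * (A + Real.log (1+u) + t) ^ (-μ-1) * (1+u)⁻¹)
      (-μ * ((-μ-1) * (A + Real.log (1+s) + t) ^ (-μ-2) * (1+s)⁻¹ * (1+s)⁻¹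
        + (A + Real.log (1+s) + t) ^ (-μ-1) * (-1 / (1+s)^2))) s := by
  have h1 : (0:ℝ) < 1 + s := by linarith
  have ha := logRpow_hasDerivAt A t s hs hA ht (-μ-1)
  rw [show (-μ-1-1 : ℝ) = -μ-2 by ring] at ha
  have hinv : HasDerivAt (fun u : ℝ => (1+u)⁻¹) (-1 / (1+s)^2) s := by
    simpa using ((hasDerivAt_id s).const_add 1).fun_inv h1.ne'
  simpa [mul_assoc] using (ha.mul hinv).const_mul (-μ)

lemma first_fderiv (μ A t : ℝ) (hA : 1 ≤ A) (ht : 0 < t) (n : ℕ) (y : EuclideanSpace ℝ (Fin n)) :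
    HasFDerivAt (fun y : EuclideanSpace ℝ (Fin n) => (A + Real.log (1 + ‖y‖ ^ 2) + t) ^ (-μ))
      (((-μ) * (A + Real.log (1 + ‖y‖^2) + t) ^ (-μ-1) * (1+‖y‖^2)⁻¹) • (2 • innerSL ℝ y)) y := by
  have hN : HasFDerivAt (fun y : EuclideanSpace ℝ (Fin n) => ‖y‖ ^ 2) (2 • innerSL ℝ y) y :=
    (hasStrictFDerivAt_norm_sq y).hasFDerivAt
  have hF := logRpow_hasDerivAt A t (‖y‖^2) (by positivity) hA ht (-μ)
  simpa [Function.comp_def] using hF.comp_hasFDerivAt y hN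

set_option maxHeartbeats 1000000 in
/-- Let `m ≥ 2`, `μ > 0` and `A ≥ 1` with `(4m−5)A ≥ 4μ+4`. Then
`w(t,x) = (A + ln(1+|x|²) + t)^{−μ}` on `ℝ^{2m} × (0,∞)` is a supersolution:
`(−(1+|x|²)Δ + ∂_t) w ≥ 0`. -/
theorem conformal_heat_supersolution (m : ℕ) (hm : 2 ≤ m) (μ A : ℝ)
    (hμ : 0 < μ) (hA1 : 1 ≤ A) (hA2 : 4 * μ + 4 ≤ (4 * (m : ℝ) - 5) * A) :
    ∀ t > (0:ℝ), ∀ x : EuclideanSpace ℝ (Fin (2 * m)),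
      0 ≤ -(1 + ‖x‖ ^ 2) *
            laplacian (fun y => (A + Real.log (1 + ‖y‖ ^ 2) + t) ^ (-μ)) x
          + deriv (fun s => (A + Real.log (1 + ‖x‖ ^ 2) + s) ^ (-μ)) t := by
  intro t ht x
  set r : ℝ := ‖x‖ ^ 2 with hrdef
  have hr0 : (0:ℝ) ≤ r := by positivity
  have h1r : (0:ℝ) < 1 + r := by linarith
  set L : ℝ := A + Real.log (1 + r) + t with hLdef
  have hlog0 : 0 ≤ Real.log (1 + r) := Real.log_nonneg (by linarith)
  have hL0 : 0 < L := by rw [hLdef]; linarith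
  have hLA : A ≤ L := by rw [hLdef]; linarith
  have hL1 : 1 ≤ L := le_trans hA1 hLA
  -- shorthand for the derivative coefficients
  set G : ℝ → ℝ := fun s => -μ * (A + Real.log (1+s) + t) ^ (-μ-1) * (1+s)⁻¹ with hGdef
  set GP : ℝ → ℝ := fun s => -μ * ((-μ-1) * (A + Real.log (1+s) + t) ^ (-μ-2) * (1+s)⁻¹ * (1+s)⁻¹
        + (A + Real.log (1+s) + t) ^ (-μ-1) * (-1 / (1+s)^2)) with hGPdef
  -- the inner function of the laplacian
  have hinner : ∀ i : Fin (2*m), (fun y : EuclideanSpace ℝ (Fin (2*m)) =>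
      fderiv ℝ (fun y => (A + Real.log (1 + ‖y‖ ^ 2) + t) ^ (-μ)) y (EuclideanSpace.single i 1))
      = fun y => G (‖y‖^2) * (2 * y i) := by
    intro i
    funext y
    rw [(first_fderiv μ A t hA1 ht (2*m) y).fderiv]
    simp [hGdef, EuclideanSpace.inner_single_right, mul_comm]
  -- second derivative term
  have hterm : ∀ i : Fin (2*m),
      fderiv ℝ (fun y : EuclideanSpace ℝ (Fin (2*m)) =>
        fderiv ℝ (fun y => (A + Real.log (1 + ‖y‖ ^ 2) + t) ^ (-μ)) y (EuclideanSpace.single i 1))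
        x (EuclideanSpace.single i 1)
      = 2 * G r + 4 * GP r * (x i)^2 := by
    intro i
    rw [hinner i]
    have hN : HasFDerivAt (fun y : EuclideanSpace ℝ (Fin (2*m)) => ‖y‖ ^ 2) (2 • innerSL ℝ x) x :=
      (hasStrictFDerivAt_norm_sq x).hasFDerivAt
    have hGN : HasFDerivAt (fun y : EuclideanSpace ℝ (Fin (2*m)) => G (‖y‖^2))
        (GP r • (2 • innerSL ℝ x)) x := by
      have := (G_hasDerivAt μ A t (‖x‖^2) (by positivity) hA1 ht).comp_hasFDerivAt x hN
      simpa [Function.comp_def, hGdef, hGPdef] using this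
    have hcoord : HasFDerivAt (fun y : EuclideanSpace ℝ (Fin (2*m)) => 2 * y i)
        ((2:ℝ) • (EuclideanSpace.proj i : EuclideanSpace ℝ (Fin (2*m)) →L[ℝ] ℝ)) x := by
      simpa using ((EuclideanSpace.proj i : EuclideanSpace ℝ (Fin (2*m)) →L[ℝ] ℝ).hasFDerivAt
        (x := x)).const_mul (2:ℝ)
    have hmul := hGN.fun_mul hcoord
    rw [hmul.fderiv]
    simp [EuclideanSpace.inner_single_right, EuclideanSpace.single_apply, hrdef]
    ring
  -- compute the laplacian
  have hLap : laplacian (fun y => (A + Real.log (1 + ‖y‖ ^ 2) + t) ^ (-μ)) x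
      = ((2*m:ℕ):ℝ) * (2 * G r) + 4 * GP r * r := by
    rw [laplacian]
    rw [Finset.sum_congr rfl (fun i _ => hterm i)]
    rw [Finset.sum_add_distrib, Finset.sum_const, ← Finset.mul_sum]
    have hsq : ∑ i, (x i)^2 = r := by
      rw [hrdef, PiLp.norm_sq_eq_of_L2]
      simp [Real.norm_eq_abs, sq_abs]
    rw [hsq]
    simp [Finset.card_univ]
  -- time derivative
  have hdt : deriv (fun s => (A + Real.log (1 + ‖x‖ ^ 2) + s) ^ (-μ)) t
      = -μ * L ^ (-μ-1) := by
    have h := (Real.hasDerivAt_rpow_const (p := -μ) (Or.inl hL0.ne')).comp t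
      ((hasDerivAt_id t).const_add (A + Real.log (1 + ‖x‖^2)))
    have h' : HasDerivAt (fun s => (A + Real.log (1 + ‖x‖ ^ 2) + s) ^ (-μ))
        (-μ * L ^ (-μ-1)) t := by
      exact h.congr_deriv (by rw [mul_one])
    exact h'.deriv
  rw [hLap, hdt]
  -- substitute P
  set P : ℝ := L ^ (-μ-2) with hPdef
  have hP0 : 0 < P := Real.rpow_pos_of_pos hL0 _
  have hLP : L ^ (-μ-1) = P * L := by
    rw [hPdef, ← Real.rpow_add_one hL0.ne' (-μ-2)]
    have : (-μ-2+1:ℝ) = -μ-1 := by ring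
    rw [this]
  have hGr : G r = -μ * (P * L) * (1+r)⁻¹ := by rw [hGdef]; simp only [← hLdef, hLP]
  have hGPr : GP r = -μ * ((-μ-1) * P * (1+r)⁻¹ * (1+r)⁻¹ + (P * L) * (-1 / (1+r)^2)) := by
    rw [hGPdef]; simp only [← hLdef, hLP, hPdef]
  rw [hGr, hGPr, hLP]
  clear hinner hterm hLap hdt hGr hGPr hGdef hGPdef hLP hPdef hlog0 G GP
  clear_value P L r
  clear hLdef hrdef
  -- key algebraic identity
  have hkey : -(1 + r) * (((2*m:ℕ):ℝ) * (2 * (-μ * (P * L) * (1+r)⁻¹))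
        + 4 * (-μ * ((-μ-1) * P * (1+r)⁻¹ * (1+r)⁻¹ + (P * L) * (-1 / (1+r)^2))) * r)
      + (-μ * (P * L))
      = μ * P * ((2*((2*m:ℕ):ℝ)-1)*L*(1+r) - 4*r*(μ+1+L)) / (1+r) := by
    field_simp
    ring
  rw [hkey]
  have hm' : (2:ℝ) ≤ (m:ℝ) := by exact_mod_cast hm
  have hcast : ((2*m:ℕ):ℝ) = 2 * (m:ℝ) := by push_cast; ring
  rw [hcast]
  have h45 : (0:ℝ) ≤ 4*(m:ℝ) - 5 := by linarith
  have h3 : 4*μ + 4 ≤ (4*(m:ℝ)-5)*L :=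
    le_trans hA2 (mul_le_mul_of_nonneg_left hLA h45)
  have h4 : (0:ℝ) ≤ r * ((4*(m:ℝ)-5)*L - (4*μ+4)) := mul_nonneg hr0 (by linarith)
  have h5 : (0:ℝ) ≤ (2*(2*(m:ℝ))-1)*L := mul_nonneg (by linarith) (by linarith)
  have hbr : (0:ℝ) ≤ (2*(2*(m:ℝ))-1)*L*(1+r) - 4*r*(μ+1+L) := by nlinarith [h4, h5]
  positivity
end

section
/- Let u : ℂᵐ × [0,T] → ℝ be bounded, C^{2,1}, satisfying (−(1+|x|²)Δ + ∂/∂t) u ≥ 0 and u(x,0) ≥ 0. Then u ≥ 0 on ℂᵐ × [0,T]. -/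
open Real Set
open Filter Topology

lemma second_deriv_nonneg_of_isLocalMin {f : ℝ → ℝ} {a : ℝ} (hf : ContDiff ℝ 2 f)
    (hmin : IsLocalMin f a) : 0 ≤ deriv (deriv f) a := by
  by_contra hneg
  push_neg at hneg
  have hf' : ContDiff ℝ (1+1) f := by norm_num; exact hf
  have hf1 : ContDiff ℝ 1 (deriv f) := (contDiff_succ_iff_deriv.mp hf').2.2
  have hda : DifferentiableAt ℝ (deriv f) a := (hf1.differentiable one_ne_zero) a
  have h1 : deriv f a = 0 := hmin.deriv_eq_zero
  have hslope := hasDerivAt_iff_tendsto_slope.mp hda.hasDerivAt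
  have hev : ∀ᶠ x in 𝓝[>] a, slope (deriv f) a x < 0 :=
    (hslope.mono_left (nhdsWithin_mono a fun x hx => ne_of_gt hx)).eventually_lt_const hneg
  have hev' : ∀ᶠ x in 𝓝[>] a, deriv f x < 0 := by
    filter_upwards [hev, self_mem_nhdsWithin] with x hx hx'
    rw [slope_def_field] at hx
    have hxa : (0:ℝ) < x - a := sub_pos.2 hx'
    by_contra hge
    push_neg at hge
    exact absurd (div_nonneg (by linarith) hxa.le) (not_le.2 hx)
  obtain ⟨b, hb, hIoc⟩ := mem_nhdsGT_iff_exists_Ioc_subset.mp hev'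
  obtain ⟨δ, hδ, hball⟩ := Metric.eventually_nhds_iff.mp hmin
  set c := min b (a + δ/2) with hc
  have hac : a < c := lt_min hb (by linarith)
  have hanti : StrictAntiOn f (Icc a c) := by
    apply strictAntiOn_of_deriv_neg (convex_Icc a c) (hf.continuous.continuousOn)
    intro x hx
    rw [interior_Icc] at hx
    exact hIoc ⟨hx.1, hx.2.le.trans (min_le_left _ _)⟩
  have h2 : f c < f a := hanti (left_mem_Icc.2 hac.le) (right_mem_Icc.2 hac.le) hac
  have h3 : f a ≤ f c := by
    apply hball
    rw [Real.dist_eq, abs_of_pos (by linarith)]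
    have : c ≤ a + δ/2 := min_le_right _ _
    linarith
  linarith

lemma deriv_deriv_line {E : Type*} [NormedAddCommGroup E] [NormedSpace ℝ E]
    {f : E → ℝ} (hf : ContDiff ℝ 2 f) (x e : E) :
    deriv (deriv (fun s : ℝ => f (x + s • e))) 0 = fderiv ℝ (fun y => fderiv ℝ f y e) x e := by
  have hL : ∀ s : ℝ, HasDerivAt (fun s : ℝ => x + s • e) e s := fun s => by
    simpa using ((hasDerivAt_id s).smul_const e).const_add x
  have hfd : Differentiable ℝ f := hf.differentiable two_ne_zero
  have hg : deriv (fun s : ℝ => f (x + s • e)) = fun s => fderiv ℝ f (x + s • e) e := by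
    funext s
    exact ((hfd (x + s • e)).hasFDerivAt.comp_hasDerivAt s (hL s)).deriv
  rw [hg]
  have hG : Differentiable ℝ (fun y => fderiv ℝ f y e) :=
    ((hf.fderiv_right (m := 1) (le_refl _)).differentiable one_ne_zero).clm_apply (differentiable_const e)
  have h0 : HasDerivAt (fun s : ℝ => fderiv ℝ f (x + s • e) e)
      (fderiv ℝ (fun y => fderiv ℝ f y e) x e) 0 := by
    have := (hG (x + (0:ℝ) • e)).hasFDerivAt.comp_hasDerivAt 0 (hL 0)
    simpa [Function.comp_def] using this
  exact h0.deriv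

lemma laplacian_add_const_mul {n : ℕ} {f g : EuclideanSpace ℝ (Fin n) → ℝ}
    (hf : ContDiff ℝ 2 f) (hg : ContDiff ℝ 2 g) (c : ℝ) (x : EuclideanSpace ℝ (Fin n)) :
    laplacian (fun y => f y + c * g y) x = laplacian f x + c * laplacian g x := by
  unfold laplacian
  rw [Finset.mul_sum, ← Finset.sum_add_distrib]
  refine Finset.sum_congr rfl fun i _ => ?_
  set e := EuclideanSpace.single (𝕜 := ℝ) i (1:ℝ) with he
  have hfd := hf.differentiable two_ne_zero
  have hgd := hg.differentiable two_ne_zero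
  have h1 : (fun y => fderiv ℝ (fun z => f z + c * g z) y e)
      = fun y => fderiv ℝ f y e + c * fderiv ℝ g y e := by
    funext y
    rw [fderiv_fun_add (hfd y) ((hgd y).const_mul c), fderiv_const_mul (hgd y)]
    simp
  rw [h1]
  have hGf : Differentiable ℝ (fun y => fderiv ℝ f y e) :=
    ((hf.fderiv_right (m := 1) (le_refl _)).differentiable one_ne_zero).clm_apply (differentiable_const e)
  have hGg : Differentiable ℝ (fun y => fderiv ℝ g y e) :=
    ((hg.fderiv_right (m := 1) (le_refl _)).differentiable one_ne_zero).clm_apply (differentiable_const e)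
  rw [fderiv_fun_add (hGf x) ((hGg x).const_mul c), fderiv_const_mul (hGg x)]
  simp

lemma laplacian_one_add_norm_sq {n : ℕ} (x : EuclideanSpace ℝ (Fin n)) :
    laplacian (fun y => 1 + ‖y‖ ^ 2) x = 2 * n := by
  unfold laplacian
  have key : ∀ i : Fin n, fderiv ℝ (fun y : EuclideanSpace ℝ (Fin n) =>
      fderiv ℝ (fun z => 1 + ‖z‖ ^ 2) y (EuclideanSpace.single i 1)) x
      (EuclideanSpace.single i 1) = 2 := by
    intro i
    have h1 : (fun y : EuclideanSpace ℝ (Fin n) =>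
        fderiv ℝ (fun z => 1 + ‖z‖ ^ 2) y (EuclideanSpace.single i 1))
        = fun y => 2 * y i := by
      funext y
      have hd : HasFDerivAt (fun z : EuclideanSpace ℝ (Fin n) => 1 + ‖z‖ ^ 2)
          (2 • (innerSL ℝ y)) y := ((hasStrictFDerivAt_norm_sq y).hasFDerivAt).const_add 1
      rw [hd.fderiv]
      simp [EuclideanSpace.inner_single_right]
    rw [h1]
    have h2 : HasFDerivAt (fun y : EuclideanSpace ℝ (Fin n) => 2 * y i)
        ((2:ℝ) • (EuclideanSpace.proj (𝕜 := ℝ) i)) x :=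
      ((EuclideanSpace.proj (𝕜 := ℝ) i).hasFDerivAt).const_mul 2
    rw [h2.fderiv]
    simp [EuclideanSpace.single_apply]
  simp only [key]
  simp [Finset.sum_const, mul_comm]

/-- Parabolic maximum principle on `ℂᵐ ≅ ℝ^{2m}` for the operator
`−(1+|x|²)Δ + ∂_t`: a bounded `C^{2,1}` function `u` with
`(−(1+|x|²)Δ + ∂_t)u ≥ 0` and `u(·,0) ≥ 0` is nonnegative on
`ℝ^{2m} × [0,T]`. -/
theorem conformal_parabolic_maximum_principle (m : ℕ) (T : ℝ) (hT : 0 < T)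
    (u : EuclideanSpace ℝ (Fin (2 * m)) → ℝ → ℝ)
    (hbdd : ∃ M : ℝ, ∀ x, ∀ t ∈ Icc (0:ℝ) T, |u x t| ≤ M)
    (hcont : ContinuousOn (fun p : EuclideanSpace ℝ (Fin (2 * m)) × ℝ => u p.1 p.2)
      (univ ×ˢ Icc 0 T))
    (hx2 : ∀ t ∈ Icc (0:ℝ) T, ContDiff ℝ 2 (fun x => u x t))
    (ht1 : ∀ x, DifferentiableOn ℝ (u x) (Icc 0 T))
    (hineq : ∀ x, ∀ t ∈ Icc (0:ℝ) T,
      0 ≤ -(1 + ‖x‖ ^ 2) * laplacian (fun y => u y t) x +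
        derivWithin (u x) (Icc 0 T) t)
    (h0 : ∀ x, 0 ≤ u x 0) :
    ∀ x, ∀ t ∈ Icc (0:ℝ) T, 0 ≤ u x t := by
  obtain ⟨M, hM⟩ := hbdd
  have hM0 : 0 ≤ M := le_trans (abs_nonneg _) (hM 0 0 ⟨le_refl _, hT.le⟩)
  set C : ℝ := 2 * (2 * m) + 1 with hCdef
  have hCpos : 0 < C := by positivity
  -- main step: for every ε > 0, the perturbed function is nonnegative
  have key : ∀ ε : ℝ, 0 < ε → ∀ x, ∀ t ∈ Icc (0:ℝ) T,
      0 ≤ u x t + ε * Real.exp (C * t) * (1 + ‖x‖ ^ 2) := by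
    intro ε hε
    by_contra hcon
    push_neg at hcon
    obtain ⟨x₁, t₁, ht₁, hneg⟩ := hcon
    set w : EuclideanSpace ℝ (Fin (2 * m)) → ℝ → ℝ :=
      fun x t => u x t + ε * Real.exp (C * t) * (1 + ‖x‖ ^ 2) with hwdef
    set R : ℝ := Real.sqrt (M / ε) with hRdef
    have hfar : ∀ x, ∀ t ∈ Icc (0:ℝ) T, R ≤ ‖x‖ → ε ≤ w x t := by
      intro x t ht hx
      have h1 : M / ε ≤ ‖x‖ ^ 2 := by
        have := Real.sq_sqrt (div_nonneg hM0 hε.le)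
        nlinarith [pow_le_pow_left₀ (Real.sqrt_nonneg (M/ε)) hx 2]
      have h2 : M ≤ ε * ‖x‖ ^ 2 := by
        rw [div_le_iff₀ hε] at h1; linarith [h1]
      have h3 : (1:ℝ) ≤ Real.exp (C * t) :=
        Real.one_le_exp (mul_nonneg hCpos.le ht.1)
      have h4 : -M ≤ u x t := neg_le_of_abs_le (hM x t ht)
      have h5 : ε * (1 + ‖x‖ ^ 2) ≤ ε * Real.exp (C * t) * (1 + ‖x‖ ^ 2) := by
        nlinarith [sq_nonneg ‖x‖]
      simp only [hwdef]
      nlinarith [sq_nonneg ‖x‖]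
    set K : Set (EuclideanSpace ℝ (Fin (2 * m)) × ℝ) :=
      Metric.closedBall 0 R ×ˢ Icc 0 T with hKdef
    have hKc : IsCompact K := (isCompact_closedBall 0 R).prod isCompact_Icc
    have hwcont : ContinuousOn (fun p : EuclideanSpace ℝ (Fin (2 * m)) × ℝ => w p.1 p.2) K := by
      apply ContinuousOn.add
      · exact hcont.mono (prod_mono (subset_univ _) Subset.rfl)
      · apply Continuous.continuousOn
        have hexpc : Continuous fun p : EuclideanSpace ℝ (Fin (2 * m)) × ℝ => Real.exp (C * p.2) :=
          (Real.continuous_exp.comp (continuous_const.mul continuous_snd))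
        exact (continuous_const.mul hexpc).mul
          (continuous_const.add ((continuous_norm.comp continuous_fst).pow 2))
    have hmem1 : (x₁, t₁) ∈ K := by
      constructor
      · rw [Metric.mem_closedBall, dist_zero_right]
        by_contra hgt
        push_neg at hgt
        exact absurd (hfar x₁ t₁ ht₁ hgt.le) (by simp only [hwdef] at hneg ⊢; linarith)
      · exact ht₁
    obtain ⟨p₀, hp₀K, hp₀⟩ := hKc.exists_isMinOn ⟨(x₁, t₁), hmem1⟩ hwcont
    obtain ⟨x₀, t₀⟩ := p₀
    have hp₀' : ∀ p ∈ K, w x₀ t₀ ≤ w p.1 p.2 := fun p hp => hp₀ hp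
    have hneg₀ : w x₀ t₀ < 0 := lt_of_le_of_lt (hp₀' (x₁, t₁) hmem1) hneg
    have ht₀mem : t₀ ∈ Icc (0:ℝ) T := hp₀K.2
    have hglob : ∀ x, ∀ t ∈ Icc (0:ℝ) T, w x₀ t₀ ≤ w x t := by
      intro x t ht
      by_cases hx : ‖x‖ ≤ R
      · exact hp₀' (x, t) ⟨by rwa [Metric.mem_closedBall, dist_zero_right], ht⟩
      · push_neg at hx
        linarith [hfar x t ht hx.le, hneg₀, hε]
    have ht₀pos : 0 < t₀ := by
      rcases lt_or_eq_of_le ht₀mem.1 with h | h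
      · exact h
      · exfalso
        have : 0 ≤ w x₀ t₀ := by
          simp only [hwdef, ← h, mul_zero, Real.exp_zero]
          nlinarith [h0 x₀, sq_nonneg ‖x₀‖]
        linarith
    -- spatial: laplacian of w(·, t₀) at x₀ is nonnegative
    have hexp := Real.exp_pos (C * t₀)
    have hwx2 : ContDiff ℝ 2 (fun x => w x t₀) := by
      apply (hx2 t₀ ht₀mem).add
      exact contDiff_const.mul (contDiff_const.add (contDiff_norm_sq (𝕜 := ℝ)))
    have hlap_nonneg : 0 ≤ laplacian (fun x => w x t₀) x₀ := by
      unfold laplacian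
      apply Finset.sum_nonneg
      intro i _
      set e := EuclideanSpace.single (𝕜 := ℝ) i (1:ℝ) with he
      rw [← deriv_deriv_line hwx2 x₀ e]
      apply second_deriv_nonneg_of_isLocalMin
      · apply hwx2.comp
        exact contDiff_const.add (contDiff_id.smul contDiff_const)
      · apply Filter.Eventually.of_forall
        intro s
        have := hglob (x₀ + s • e) t₀ ht₀mem
        simpa using this
    have hlapw : laplacian (fun x => w x t₀) x₀
        = laplacian (fun y => u y t₀) x₀ + (ε * Real.exp (C * t₀)) * (2 * (2 * m)) := by
      have h := laplacian_add_const_mul (f := fun y => u y t₀)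
        (g := fun y => 1 + ‖y‖ ^ 2) (hx2 t₀ ht₀mem)
        (contDiff_const.add (contDiff_norm_sq (𝕜 := ℝ))) (ε * Real.exp (C * t₀)) x₀
      have heq : (fun x => w x t₀)
          = fun y => u y t₀ + (ε * Real.exp (C * t₀)) * (1 + ‖y‖ ^ 2) := by
        funext y; simp only [hwdef]
      rw [heq, h, laplacian_one_add_norm_sq]
      push_cast
      ring
    -- time: derivative of w(x₀, ·) at t₀ within Icc is nonpositive
    have hUD : UniqueDiffWithinAt ℝ (Icc (0:ℝ) T) t₀ := (uniqueDiffOn_Icc hT) t₀ ht₀mem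
    have hv : HasDerivAt (fun t => ε * Real.exp (C * t) * (1 + ‖x₀‖ ^ 2))
        (ε * (Real.exp (C * t₀) * (C * 1)) * (1 + ‖x₀‖ ^ 2)) t₀ :=
      ((((hasDerivAt_id t₀).const_mul C).exp).const_mul ε).mul_const _
    have hdiffW : DifferentiableWithinAt ℝ (w x₀) (Icc 0 T) t₀ :=
      (ht1 x₀ t₀ ht₀mem).add hv.differentiableAt.differentiableWithinAt
    have hdw : derivWithin (w x₀) (Icc 0 T) t₀
        = derivWithin (u x₀) (Icc 0 T) t₀
          + ε * (Real.exp (C * t₀) * (C * 1)) * (1 + ‖x₀‖ ^ 2) := by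
      have : w x₀ = fun t => u x₀ t + ε * Real.exp (C * t) * (1 + ‖x₀‖ ^ 2) := rfl
      rw [this, derivWithin_fun_add (ht1 x₀ t₀ ht₀mem)
        hv.differentiableAt.differentiableWithinAt,
        (hv.hasDerivWithinAt).derivWithin hUD]
    have hdw_nonpos : derivWithin (w x₀) (Icc 0 T) t₀ ≤ 0 := by
      have hmino : IsLocalMinOn (w x₀) (Icc (0:ℝ) T) t₀ :=
        eventually_mem_nhdsWithin.mono (fun t ht => hglob x₀ t ht)
      have hcone : (0 - t₀) ∈ posTangentConeAt (Icc (0:ℝ) T) t₀ := by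
        apply sub_mem_posTangentConeAt_of_segment_subset
        rw [segment_symm, segment_eq_Icc ht₀pos.le]
        exact Icc_subset_Icc_right ht₀mem.2
      have h := hmino.hasFDerivWithinAt_nonneg hdiffW.hasDerivWithinAt.hasFDerivWithinAt hcone
      simp only [ContinuousLinearMap.toSpanSingleton_apply, ContinuousLinearMap.smulRight_apply, ContinuousLinearMap.one_apply,
        smul_eq_mul, zero_sub, neg_mul] at h
      nlinarith [ht₀pos]
    -- contradiction
    have hin := hineq x₀ t₀ ht₀mem
    have hPpos : (0:ℝ) < 1 + ‖x₀‖ ^ 2 := by positivity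
    have hεE : (0:ℝ) < ε * Real.exp (C * t₀) := mul_pos hε hexp
    rw [hlapw] at hlap_nonneg
    rw [hdw] at hdw_nonpos
    nlinarith [mul_nonneg hPpos.le hlap_nonneg, mul_pos hεE hPpos]
  -- let ε → 0
  intro x t ht
  by_contra hlt
  push_neg at hlt
  have hc : 0 < Real.exp (C * t) * (1 + ‖x‖ ^ 2) := by positivity
  set c := Real.exp (C * t) * (1 + ‖x‖ ^ 2) with hcdef
  have hδ := key (-(u x t) / c / 2) (div_pos (div_pos (by linarith) hc) two_pos) x t ht
  have heq : (-(u x t) / c / 2) * Real.exp (C * t) * (1 + ‖x‖ ^ 2) = -(u x t) / 2 := by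
    rw [mul_assoc, ← hcdef]
    field_simp
  rw [heq] at hδ
  linarith
end
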